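/- Let 0 < m < 1 and let a ∈ ℂ with Im(a) > 0 and 2√m·Im(a) ≥ (1−m)·|Re(a)|. Then for all u, v ∈ L^{m+1}(ℝ^N;ℂ), the function x ↦ (g(u(x)) − g(v(x)))·conj(u(x) − v(x)) is integrable on ℝ^N and Re( −i·a·∫_{ℝ^N} (g(u) − g(v))·conj(u − v) dx ) ≥ 0. -/

import Mathlib

open MeasureTheory Set Filter
open scoped ENNReal Topology

noncomputable section

/-- `g(z) = |z|^(m-1) · z` (so that `g(0) = 0`, since `0 ^ (m-1) = 0` for `m < 1`). -/
def gfun (m : ℝ) (z : ℂ) : ℂ := ((‖z‖ ^ (m - 1) : ℝ) : ℂ) * z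

lemma sinh_kernel {lam t : ℝ} (hlam : 1 ≤ lam) (ht : 0 ≤ t) :
    lam * Real.sinh t ≤ Real.sinh (lam * t) := by
  have hd : ∀ x : ℝ, HasDerivAt (fun y => Real.sinh (lam * y) - lam * Real.sinh y)
      (Real.cosh (lam * x) * lam - lam * Real.cosh x) x := by
    intro x
    have h1 : HasDerivAt (fun y : ℝ => lam * y) lam x := by
      simpa using (hasDerivAt_id x).const_mul lam
    exact ((Real.hasDerivAt_sinh (lam * x)).comp x h1).sub
      ((Real.hasDerivAt_sinh x).const_mul lam)
  have hmono : MonotoneOn (fun y => Real.sinh (lam * y) - lam * Real.sinh y) (Set.Ici 0) := by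
    apply monotoneOn_of_deriv_nonneg (convex_Ici 0)
    · exact fun x _ => ((hd x).differentiableAt.continuousAt).continuousWithinAt
    · exact fun x _ => ((hd x).differentiableAt).differentiableWithinAt
    · intro x hx
      rw [interior_Ici] at hx
      rw [(hd x).deriv]
      have hx0 : 0 ≤ x := le_of_lt hx
      have hxx : |x| ≤ |lam * x| := by
        rw [abs_of_nonneg hx0, abs_of_nonneg (by nlinarith)]
        nlinarith
      have := Real.cosh_le_cosh.2 hxx
      nlinarith [this]
  have h0 := hmono (self_mem_Ici) (by exact ht) ht
  simpa using h0

lemma expform {m : ℝ} (hm0 : 0 < m) (hm1 : m < 1) {x : ℝ} (hx : 0 ≤ x) :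
    4*m*(Real.exp (m*x) - Real.exp x)^2 ≤
      (1-m)^2*((Real.exp (m*x))^2 - 1)*((Real.exp x)^2 - 1) := by
  have h1m : (0:ℝ) < 1 - m := by linarith
  set P := Real.exp ((1-m)*x/2) with hPdef
  set Q := Real.exp ((1+m)*x/2) with hQdef
  have hP : 0 < P := Real.exp_pos _
  have hQ : 0 < Q := Real.exp_pos _
  have hP1 : 1 ≤ P := Real.one_le_exp (by nlinarith)
  have hQ1 : 1 ≤ Q := Real.one_le_exp (by nlinarith)
  -- kernel
  have hlam : 1 ≤ (1+m)/(1-m) := by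
    rw [le_div_iff₀ h1m]; linarith
  have hker := sinh_kernel hlam (t := (1-m)*x/2) (by nlinarith)
  have hlt : (1+m)/(1-m) * ((1-m)*x/2) = (1+m)*x/2 := by field_simp
  rw [hlt] at hker
  have hker2 : (1+m) * Real.sinh ((1-m)*x/2) ≤ (1-m) * Real.sinh ((1+m)*x/2) := by
    have := mul_le_mul_of_nonneg_left hker h1m.le
    calc (1+m) * Real.sinh ((1-m)*x/2)
        = (1-m) * ((1+m)/(1-m) * Real.sinh ((1-m)*x/2)) := by field_simp
      _ ≤ (1-m) * Real.sinh ((1+m)*x/2) := this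
  have hsinhP : Real.sinh ((1-m)*x/2) = (P - P⁻¹)/2 := by
    rw [Real.sinh_eq, ← Real.exp_neg]
  have hsinhQ : Real.sinh ((1+m)*x/2) = (Q - Q⁻¹)/2 := by
    rw [Real.sinh_eq, ← Real.exp_neg]
  rw [hsinhP, hsinhQ] at hker2
  -- clear denominators: h2 : (1+m)*Q*(P^2-1) ≤ (1-m)*P*(Q^2-1)
  have h2 : (1+m)*Q*(P^2-1) ≤ (1-m)*P*(Q^2-1) := by
    have hmul := mul_le_mul_of_nonneg_right hker2 (le_of_lt (mul_pos hP hQ))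
    have e1 : (1+m)*((P-P⁻¹)/2)*(P*Q) = (1+m)*Q*(P^2-1)/2 := by
      field_simp <;> ring
    have e2 : (1-m)*((Q-Q⁻¹)/2)*(P*Q) = (1-m)*P*(Q^2-1)/2 := by
      field_simp <;> ring
    rw [e1, e2] at hmul
    linarith
  have hP21 : (0:ℝ) ≤ P^2 - 1 := by nlinarith
  have h3 : 0 ≤ (1+m)*Q*(P^2-1) :=
    mul_nonneg (mul_nonneg (by linarith) hQ.le) hP21
  have h4 : ((1+m)*Q*(P^2-1))^2 ≤ ((1-m)*P*(Q^2-1))^2 := by nlinarith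
  have key2 : 4*m*Q^2*(P^2-1)^2 ≤ (1-m)^2*(Q^2-P^2)*(P^2*Q^2-1) := by nlinarith [h4]
  -- relations
  have hBPQ : Real.exp x = P*Q := by rw [hPdef, hQdef, ← Real.exp_add]; ring_nf
  have hA : Real.exp (m*x) * P = Q := by rw [hPdef, hQdef, ← Real.exp_add]; ring_nf
  rw [hBPQ]
  set A := Real.exp (m*x) with hAdef
  have e1 : P^2 * (4*m*(A - P*Q)^2) = 4*m*Q^2*(P^2-1)^2 := by
    linear_combination (4*m*(A*P + Q - 2*P^2*Q)) * hA
  have e2 : P^2 * ((1-m)^2*(A^2-1)*((P*Q)^2-1)) = (1-m)^2*(Q^2-P^2)*(P^2*Q^2-1) := by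
    linear_combination ((1-m)^2*(A*P+Q)*((P*Q)^2-1)) * hA
  have hP2 : (0:ℝ) < P^2 := by positivity
  have := le_of_mul_le_mul_left (by linarith [key2, e1.le, e2.ge] : P^2 * (4*m*(A - P*Q)^2) ≤ P^2 * ((1-m)^2*(A^2-1)*((P*Q)^2-1))) hP2
  exact this

lemma rpow_mul_self {r : ℝ} (hr : 0 ≤ r) {a : ℝ} (ha : a + 1 ≠ 0) :
    r ^ a * r = r ^ (a + 1) := by
  rcases eq_or_lt_of_le hr with h | h
  · rw [← h, Real.zero_rpow ha]
    simp
  · rw [Real.rpow_add_one h.ne']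

lemma key_ineq {m : ℝ} (hm0 : 0 < m) (hm1 : m < 1) {r s : ℝ} (hs : 0 ≤ s) (hsr : s ≤ r) :
    4*m*(r^m*s - r*s^m)^2 ≤ (1-m)^2*((r^m)^2-(s^m)^2)*(r^2-s^2) := by
  have hr : 0 ≤ r := le_trans hs hsr
  rcases eq_or_lt_of_le hs with h0 | hs'
  · rw [← h0, Real.zero_rpow hm0.ne']
    norm_num
    positivity
  · have hr' : 0 < r := lt_of_lt_of_le hs' hsr
    set x := Real.log r - Real.log s with hxdef
    have hx : 0 ≤ x := by
      have := Real.log_le_log hs' hsr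
      simp [hxdef]; linarith
    have hrm : r^m = s^m * Real.exp (m*x) := by
      rw [Real.rpow_def_of_pos hr', Real.rpow_def_of_pos hs', ← Real.exp_add]
      congr 1; rw [hxdef]; ring
    have hrB : r = s * Real.exp x := by
      conv_lhs => rw [← Real.exp_log hr']
      conv_rhs => rw [← Real.exp_log hs', ← Real.exp_add]
      congr 1; rw [hxdef]; ring
    have hsm : 0 < s^m := Real.rpow_pos_of_pos hs' m
    have hexp := expform hm0 hm1 hx
    set A := Real.exp (m*x)
    set B := Real.exp x
    rw [hrm, hrB]
    have hmul := mul_le_mul_of_nonneg_left hexp (by positivity : (0:ℝ) ≤ (s^m)^2 * s^2)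
    nlinarith [hmul]

lemma main_real {m : ℝ} (hm0 : 0 < m) (hm1 : m < 1) {r s p q : ℝ}
    (hr : 0 ≤ r) (hs : 0 ≤ s) (hpq : p^2 + q^2 = r^2*s^2) :
    0 ≤ r^(m-1)*r^2 + s^(m-1)*s^2 - (r^(m-1)+s^(m-1))*p ∧
    4*m*((s^(m-1)-r^(m-1))*q)^2 ≤
      (1-m)^2*(r^(m-1)*r^2 + s^(m-1)*s^2 - (r^(m-1)+s^(m-1))*p)^2 := by
  set a' := r^(m-1) with ha'def
  set b' := s^(m-1) with hb'def
  have ha' : 0 ≤ a' := Real.rpow_nonneg hr _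
  have hb' : 0 ≤ b' := Real.rpow_nonneg hs _
  have h1 : a' * r = r^m := by
    rw [ha'def, rpow_mul_self hr (by intro h; exact hm0.ne' (by linarith))]
    norm_num
  have h2 : b' * s = s^m := by
    rw [hb'def, rpow_mul_self hs (by intro h; exact hm0.ne' (by linarith))]
    norm_num
  have hmono : 0 ≤ (a'*r - b'*s)*(r - s) := by
    rw [h1, h2]
    rcases le_total s r with h | h
    · exact mul_nonneg (by nlinarith [Real.rpow_le_rpow hs h hm0.le]) (by linarith)
    · have := Real.rpow_le_rpow hr h hm0.le
      nlinarith
  have hKEY : 4*m*((a'*r)*s - r*(b'*s))^2 ≤ (1-m)^2*((a'*r)^2-((b'*s))^2)*(r^2-s^2) := by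
    rw [h1, h2]
    rcases le_total s r with h | h
    · exact key_ineq hm0 hm1 hs h
    · have := key_ineq hm0 hm1 hr h
      nlinarith [this]
  have hp : p ≤ r*s := by
    have h5 : p ≤ |p| := le_abs_self p
    have h6 : |p| ≤ r*s := by
      have : p^2 ≤ (r*s)^2 := by nlinarith [sq_nonneg q]
      calc |p| = Real.sqrt (p^2) := (Real.sqrt_sq_eq_abs p).symm
        _ ≤ Real.sqrt ((r*s)^2) := Real.sqrt_le_sqrt this
        _ = |r*s| := Real.sqrt_sq_eq_abs _
        _ = r*s := abs_of_nonneg (mul_nonneg hr hs)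
    linarith
  constructor
  · nlinarith [hmono, mul_nonneg (add_nonneg ha' hb') (sub_nonneg.2 hp)]
  · -- second part
    have hq2 : q^2 = r^2*s^2 - p^2 := by linarith
    by_cases hD : b' = a'
    · rw [hD]
      have : ((a' - a')*q)^2 = 0 := by ring_nf
      rw [this, mul_zero]
      positivity
    · set α := (1-m)^2*(a'+b')^2 + 4*m*(b'-a')^2 with hαdef
      have hα : 0 < α := by
        have : (b'-a') ≠ 0 := sub_ne_zero.2 hD
        have h7 : 0 < (b'-a')^2 := by positivity
        nlinarith [sq_nonneg ((1-m)*(a'+b'))]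
      have hbracket : 0 ≤ (1-m)^2*((a'*r^2+b'*s^2)^2 - (a'+b')^2*(r^2*s^2)) -
          4*m*(b'-a')^2*(r^2*s^2) := by
        have hid : (1-m)^2*((a'*r^2+b'*s^2)^2 - (a'+b')^2*(r^2*s^2)) -
            4*m*(b'-a')^2*(r^2*s^2)
            = (1-m)^2*((a'*r)^2-((b'*s))^2)*(r^2-s^2) - 4*m*((a'*r)*s - r*(b'*s))^2 := by
          ring
        rw [hid]
        linarith [hKEY]
      have hid2 : α * ((1-m)^2*(a'*r^2 + b'*s^2 - (a'+b')*p)^2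
            - 4*m*((b'-a')*q)^2)
          = (α*p - (1-m)^2*(a'+b')*(a'*r^2+b'*s^2))^2
            + 4*m*(b'-a')^2 * ((1-m)^2*((a'*r^2+b'*s^2)^2 - (a'+b')^2*(r^2*s^2)) -
              4*m*(b'-a')^2*(r^2*s^2)) := by
        rw [hαdef]
        linear_combination (-(4*m*((1-m)^2*(a'+b')^2 + 4*m*(b'-a')^2)*(b'-a')^2)) * hq2
      have hF : 0 ≤ (1-m)^2*(a'*r^2 + b'*s^2 - (a'+b')*p)^2 - 4*m*((b'-a')*q)^2 := by
        have hrhs : 0 ≤ (α*p - (1-m)^2*(a'+b')*(a'*r^2+b'*s^2))^2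
            + 4*m*(b'-a')^2 * ((1-m)^2*((a'*r^2+b'*s^2)^2 - (a'+b')^2*(r^2*s^2)) -
              4*m*(b'-a')^2*(r^2*s^2)) := by
          have := mul_nonneg (by positivity : (0:ℝ) ≤ 4*m*(b'-a')^2) hbracket
          positivity
        have hαF : 0 ≤ α * ((1-m)^2*(a'*r^2 + b'*s^2 - (a'+b')*p)^2
            - 4*m*((b'-a')*q)^2) := by rw [hid2]; exact hrhs
        have := le_of_mul_le_mul_left (by linarith : α*0 ≤ α*((1-m)^2*(a'*r^2 + b'*s^2 - (a'+b')*p)^2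
            - 4*m*((b'-a')*q)^2)) hα
        linarith
      linarith [hF]

lemma pointwise_re_im (m : ℝ) (z w : ℂ) :
    ((gfun m z - gfun m w) * (starRingEnd ℂ) (z - w)).re
      = (‖z‖)^(m-1)*(‖z‖)^2 + (‖w‖)^(m-1)*(‖w‖)^2
        - ((‖z‖)^(m-1)+(‖w‖)^(m-1))*(z.re*w.re + z.im*w.im) ∧
    ((gfun m z - gfun m w) * (starRingEnd ℂ) (z - w)).im
      = ((‖w‖)^(m-1)-(‖z‖)^(m-1))*(z.im*w.re - z.re*w.im) := by
  have hz2 : z.re^2 + z.im^2 = (‖z‖)^2 := by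
    rw [Complex.sq_norm, Complex.normSq_apply]; ring
  have hw2 : w.re^2 + w.im^2 = (‖w‖)^2 := by
    rw [Complex.sq_norm, Complex.normSq_apply]; ring
  constructor
  · simp only [gfun, Complex.mul_re, Complex.sub_re, Complex.sub_im, Complex.mul_im,
      Complex.conj_re, Complex.conj_im, Complex.ofReal_re, Complex.ofReal_im]
    linear_combination (‖z‖ ^ (m-1)) * hz2 + (‖w‖ ^ (m-1)) * hw2
  · simp only [gfun, Complex.mul_re, Complex.sub_re, Complex.sub_im, Complex.mul_im,
      Complex.conj_re, Complex.conj_im, Complex.ofReal_re, Complex.ofReal_im]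
    ring

lemma pointwise_main {m : ℝ} (hm0 : 0 < m) (hm1 : m < 1) (z w : ℂ) :
    0 ≤ ((gfun m z - gfun m w) * (starRingEnd ℂ) (z - w)).re ∧
    2*Real.sqrt m * |((gfun m z - gfun m w) * (starRingEnd ℂ) (z - w)).im|
      ≤ (1-m) * ((gfun m z - gfun m w) * (starRingEnd ℂ) (z - w)).re := by
  obtain ⟨hre, him⟩ := pointwise_re_im m z w
  have hpq : (z.re*w.re + z.im*w.im)^2 + (z.im*w.re - z.re*w.im)^2
      = (‖z‖)^2 * (‖w‖)^2 := by
    have hz2 : z.re^2 + z.im^2 = (‖z‖)^2 := by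
      rw [Complex.sq_norm, Complex.normSq_apply]; ring
    have hw2 : w.re^2 + w.im^2 = (‖w‖)^2 := by
      rw [Complex.sq_norm, Complex.normSq_apply]; ring
    linear_combination ((‖w‖)^2) * hz2 + (z.re^2 + z.im^2) * hw2
  obtain ⟨H1, H2⟩ := main_real hm0 hm1 (norm_nonneg z) (norm_nonneg w) hpq
  rw [hre, him]
  refine ⟨H1, ?_⟩
  have hs : 0 < Real.sqrt m := Real.sqrt_pos.2 hm0
  have hsq : Real.sqrt m ^ 2 = m := Real.sq_sqrt hm0.le
  set Y := ((‖w‖)^(m-1)-(‖z‖)^(m-1))*(z.im*w.re - z.re*w.im)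
  set X := (‖z‖)^(m-1)*(‖z‖)^2 + (‖w‖)^(m-1)*(‖w‖)^2
        - ((‖z‖)^(m-1)+(‖w‖)^(m-1))*(z.re*w.re + z.im*w.im)
  have h1 : (2*Real.sqrt m * |Y|)^2 ≤ ((1-m)*X)^2 := by
    have : (2*Real.sqrt m * |Y|)^2 = 4*m*Y^2 := by
      rw [mul_pow, mul_pow, sq_abs]
      rw [mul_pow]
      rw [hsq]; ring
    rw [this]
    calc 4*m*Y^2 ≤ (1-m)^2*X^2 := H2
      _ = ((1-m)*X)^2 := by ring
  have h2 : 0 ≤ 2*Real.sqrt m * |Y| := by positivity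
  have h3 : 0 ≤ (1-m)*X := mul_nonneg (by linarith) H1
  nlinarith [h1, h2, h3]

lemma abs_gfun {m : ℝ} (hm0 : 0 < m) (z : ℂ) :
    ‖(gfun m z)‖ = (‖z‖)^m := by
  rw [gfun, norm_mul, Complex.norm_real, Real.norm_eq_abs,
    abs_of_nonneg (Real.rpow_nonneg (norm_nonneg z) _)]
  have h := rpow_mul_self (norm_nonneg z) (a := m-1) (by intro h; exact hm0.ne' (by linarith))
  rw [h]; norm_num

lemma norm_bound {m : ℝ} (hm0 : 0 < m) (hm1 : m < 1) (z w : ℂ) :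
    ‖(gfun m z - gfun m w) * (starRingEnd ℂ) (z - w)‖
      ≤ 2*((‖z‖)^(m+1) + (‖w‖)^(m+1)) := by
  have hr : 0 ≤ ‖z‖ := norm_nonneg z
  have hs : 0 ≤ ‖w‖ := norm_nonneg w
  set r := ‖z‖
  set s := ‖w‖
  have h1 : ‖(gfun m z - gfun m w) * (starRingEnd ℂ) (z - w)‖ ≤ (r^m + s^m) * (r + s) := by
    rw [norm_mul]
    have e1 : ‖gfun m z - gfun m w‖ ≤ r^m + s^m := by
      refine (norm_sub_le _ _).trans ?_
      rw [abs_gfun hm0, abs_gfun hm0]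
    have e2 : ‖(starRingEnd ℂ) (z - w)‖ ≤ r + s := by
      rw [RCLike.norm_conj]
      refine (norm_sub_le _ _).trans ?_
      exact le_rfl
    exact mul_le_mul e1 e2 (norm_nonneg _) (by positivity)
  have hrm1 : r^m * r = r^(m+1) := rpow_mul_self hr (by intro h; exact (by linarith : (0:ℝ) < m+1).ne' (by linarith))
  have hsm1 : s^m * s = s^(m+1) := rpow_mul_self hs (by intro h; exact (by linarith : (0:ℝ) < m+1).ne' (by linarith))
  have h2 : (r^m + s^m) * (r + s) ≤ 2*(r^(m+1) + s^(m+1)) := by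
    rcases le_total s r with h | h
    · have hm' : s^m ≤ r^m := Real.rpow_le_rpow hs h hm0.le
      nlinarith [Real.rpow_nonneg hs m, Real.rpow_nonneg hr m]
    · have hm' : r^m ≤ s^m := Real.rpow_le_rpow hr h hm0.le
      nlinarith [Real.rpow_nonneg hs m, Real.rpow_nonneg hr m]
  linarith

lemma measurable_gfun (m : ℝ) : Measurable (gfun m) := by
  apply measurable_of_continuousOn_compl_singleton 0
  intro z hz
  have hz0 : ‖z‖ ≠ 0 := by
    simp only [mem_compl_iff, mem_singleton_iff] at hz
    simpa using hz
  apply ContinuousAt.continuousWithinAt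
  unfold gfun
  exact ((Complex.continuous_ofReal.continuousAt.comp
    ((Real.continuousAt_rpow_const _ _ (Or.inl hz0)).comp
      continuous_norm.continuousAt))).mul continuousAt_id

/-- Let `0 < m < 1` and `a ∈ ℂ` with `Im a > 0` and
`2√m · Im a ≥ (1−m)·|Re a|`.  Then for all `u, v ∈ L^(m+1)(ℝ^N; ℂ)`, the function
`x ↦ (g(u x) − g(v x)) · conj (u x − v x)` is integrable and
`Re(−i·a·∫ (g(u) − g(v)) · conj (u − v)) ≥ 0`. -/
theorem statement2 (N : ℕ) (hN : 1 ≤ N) (m : ℝ) (a : ℂ)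
    (hm0 : 0 < m) (hm1 : m < 1) (haIm : 0 < a.im)
    (hA : (1 - m) * |a.re| ≤ 2 * Real.sqrt m * a.im)
    (u v : (Fin N → ℝ) → ℂ)
    (hu : MemLp u (ENNReal.ofReal (m + 1)) volume)
    (hv : MemLp v (ENNReal.ofReal (m + 1)) volume) :
    Integrable
      (fun x => (gfun m (u x) - gfun m (v x)) * (starRingEnd ℂ) (u x - v x)) volume ∧
    0 ≤ (-Complex.I * a *
      ∫ x, (gfun m (u x) - gfun m (v x)) * (starRingEnd ℂ) (u x - v x)).re := by
  set φ := fun x => (gfun m (u x) - gfun m (v x)) * (starRingEnd ℂ) (u x - v x) with hφ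
  -- a.e. strong measurability
  have hmg := measurable_gfun m
  have hgu : AEStronglyMeasurable (fun x => gfun m (u x)) volume :=
    (hmg.comp_aemeasurable hu.aestronglyMeasurable.aemeasurable).aestronglyMeasurable
  have hgv : AEStronglyMeasurable (fun x => gfun m (v x)) volume :=
    (hmg.comp_aemeasurable hv.aestronglyMeasurable.aemeasurable).aestronglyMeasurable
  have hconj : AEStronglyMeasurable (fun x => (starRingEnd ℂ) (u x - v x)) volume := by
    have := (hu.aestronglyMeasurable.sub hv.aestronglyMeasurable)
    exact (Complex.continuous_conj.comp_aestronglyMeasurable this)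
  have hφm : AEStronglyMeasurable φ volume := (hgu.sub hgv).mul hconj
  -- integrable majorant
  have hp0 : (ENNReal.ofReal (m+1)) ≠ 0 := by
    simp [ENNReal.ofReal_eq_zero]; linarith
  have hpt : (ENNReal.ofReal (m+1)) ≠ ∞ := ENNReal.ofReal_ne_top
  have hU : Integrable (fun x => ‖u x‖ ^ (m+1)) volume := by
    have := hu.integrable_norm_rpow hp0 hpt
    simpa [ENNReal.toReal_ofReal (by linarith : (0:ℝ) ≤ m+1)] using this
  have hV : Integrable (fun x => ‖v x‖ ^ (m+1)) volume := by
    have := hv.integrable_norm_rpow hp0 hpt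
    simpa [ENNReal.toReal_ofReal (by linarith : (0:ℝ) ≤ m+1)] using this
  have hmaj : Integrable (fun x => 2*(‖u x‖^(m+1) + ‖v x‖^(m+1))) volume :=
    (hU.add hV).const_mul 2
  have hint : Integrable φ volume := by
    refine hmaj.mono' hφm (Filter.Eventually.of_forall fun x => ?_)
    have := norm_bound hm0 hm1 (u x) (v x)
    exact this
  refine ⟨hint, ?_⟩
  -- real and imaginary parts
  have hre : Integrable (fun x => (φ x).re) volume := hint.re
  have him : Integrable (fun x => (φ x).im) volume := hint.im
  set K := ∫ x, φ x with hK
  have hKre : K.re = ∫ x, (φ x).re := (integral_re hint).symm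
  have hKim : K.im = ∫ x, (φ x).im := (integral_im hint).symm
  have hX : 0 ≤ K.re := by
    rw [hKre]
    exact integral_nonneg fun x => (pointwise_main hm0 hm1 (u x) (v x)).1
  have hs : 0 < Real.sqrt m := Real.sqrt_pos.2 hm0
  have hY : 2*Real.sqrt m * |K.im| ≤ (1-m) * K.re := by
    have h1 : |K.im| ≤ ∫ x, |(φ x).im| := by
      calc |K.im| = ‖∫ x, (φ x).im‖ := by rw [hKim, Real.norm_eq_abs]
        _ ≤ ∫ x, ‖(φ x).im‖ := norm_integral_le_integral_norm _
        _ = ∫ x, |(φ x).im| := by simp [Real.norm_eq_abs]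
    have h2 : ∫ x, 2*Real.sqrt m * |(φ x).im| ≤ ∫ x, (1-m) * (φ x).re := by
      refine integral_mono (him.abs.const_mul _) (hre.const_mul _) fun x => ?_
      exact (pointwise_main hm0 hm1 (u x) (v x)).2
    rw [integral_const_mul, integral_const_mul] at h2
    rw [hKre]
    calc 2*Real.sqrt m * |K.im| ≤ 2*Real.sqrt m * ∫ x, |(φ x).im| := by
          apply mul_le_mul_of_nonneg_left h1 (by positivity)
      _ = 2 * (Real.sqrt m * ∫ x, |(φ x).im|) := by ring
      _ ≤ (1-m) * ∫ x, (φ x).re := by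
          rw [← integral_const_mul, ← integral_const_mul] at h2
          rw [integral_const_mul, integral_const_mul] at h2
          linarith [h2]
  -- final algebra
  have hrealg : (-Complex.I * a * K).re = a.im * K.re + a.re * K.im := by
    simp [Complex.mul_re, Complex.mul_im]
    ring
  rw [hrealg]
  have habs : |a.re * K.im| = |a.re| * |K.im| := abs_mul _ _
  nlinarith [neg_abs_le (a.re * K.im), habs,
    mul_le_mul_of_nonneg_left hY (abs_nonneg a.re),
    mul_le_mul_of_nonneg_right hA hX, hs, hX, abs_nonneg K.im, abs_nonneg a.re]
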